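/- Let A be a group and ⟨x⟩ an infinite cyclic group. In the free product A * ⟨x⟩, the subgroup ⟨x⟩ is malnormal, every malnormal subgroup of A remains malnormal, and no nontrivial element of A is conjugate in A * ⟨x⟩ to an element of ⟨x⟩. -/

import Mathlib

/-- A subgroup `H` of `G` is malnormal if `gHg⁻¹ ∩ H = {1}` for all `g ∉ H`. -/
def Malnormal {G : Type*} [Group G] (H : Subgroup G) : Prop :=
  ∀ g : G, g ∉ H → ∀ x ∈ H, g * x * g⁻¹ ∈ H → x = 1

open Monoid


open Monoid Monoid.CoprodI

section Key

variable {ι : Type*} [DecidableEq ι] {G : ι → Type*} [∀ i, Group (G i)] [∀ i, DecidableEq (G i)]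

lemma equiv_of_toList {i : ι} (m : G i) (hm : m ≠ 1) :
    (Word.equiv (of m)).toList = [⟨i, m⟩] := by
  show (of m • Word.empty).toList = _
  rw [Word.of_smul_def, Word.equivPair_eq_of_fstIdx_ne (by simp [Word.fstIdx, Word.empty])]
  simp [Word.rcons, hm, Word.cons]

lemma equiv_of_length_le {j : ι} (m' : G j) :
    (Word.equiv (of m')).toList.length ≤ 1 := by
  by_cases hm' : m' = 1
  · subst hm'
    have h1 : (of (1 : G j)) = (1 : CoprodI G) := map_one _
    rw [h1]
    show ((1 : CoprodI G) • Word.empty).toList.length ≤ 1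
    rw [one_smul]
    simp [Word.empty]
  · rw [equiv_of_toList m' hm']
    simp

lemma prod_eq_iff {w : Word G} {g : CoprodI G} (h : w.prod = g) : Word.equiv g = w := by
  subst h
  exact Word.equiv.apply_symm_apply w

lemma conj_word_eq_of (u : Word G) :
    ∀ (i : ι) (m : G i), m ≠ 1 → ∀ (j : ι) (m' : G j),
      (u.prod)⁻¹ * of m * u.prod = of m' → i = j ∧ ∃ a : G i, (u.prod)⁻¹ = of a := by
  induction u using Word.consRecOn with
  | empty =>
    intro i m hm j m' h
    rw [Word.prod_empty, inv_one, one_mul, mul_one] at h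
    have hm' : m' ≠ 1 := by
      rintro rfl
      rw [map_one] at h
      exact hm (of_injective i (h.trans (map_one (of (i := i))).symm))
    have hl : ([⟨i, m⟩] : List (Σ i, G i)) = [⟨j, m'⟩] := by
      rw [← equiv_of_toList m hm, ← equiv_of_toList m' hm', h]
    have hsig : (⟨i, m⟩ : (Σ i, G i)) = ⟨j, m'⟩ := by injection hl
    exact ⟨congrArg Sigma.fst hsig, 1, by simp⟩
  | cons k a t h1 h2 ih =>
    intro i m hm j m' h
    rw [Word.prod_cons] at h
    by_cases hki : k = i
    · subst hki
      have h' : (t.prod)⁻¹ * of (a⁻¹ * m * a) * t.prod = of m' := by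
        rw [map_mul, map_mul]
        rw [mul_inv_rev] at h
        calc (t.prod)⁻¹ * (of a⁻¹ * of m * of a) * t.prod
            = (t.prod)⁻¹ * (of a)⁻¹ * of m * (of a * t.prod) := by
              rw [map_inv]; group
          _ = of m' := by rw [← h]
      have hnm : a⁻¹ * m * a ≠ 1 := by
        intro hh
        apply hm
        have := congrArg (fun y => a * y * a⁻¹) hh
        simpa [mul_assoc] using this
      obtain ⟨hij, b, hb⟩ := ih k (a⁻¹ * m * a) hnm j m' h'
      refine ⟨hij, b * a⁻¹, ?_⟩
      rw [Word.prod_cons, mul_inv_rev, map_mul, ← hb, map_inv]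
    · exfalso
      -- get a NeWord representing the word `cons a t h1 h2`
      obtain ⟨k₁, k₂, v, hv⟩ := NeWord.of_word (Word.cons a t h1 h2)
        (by
          intro hcontra
          have := congrArg Word.toList hcontra
          simp [Word.cons, Word.empty] at this)
      have hk₁ : k₁ = k := by
        have h1' : v.toWord.toList.head? = some ⟨k₁, v.head⟩ := by
          show v.toList.head? = _
          exact NeWord.toList_head? v
        rw [hv] at h1'
        simp [Word.cons] at h1'
        exact h1'.1.symm
      have hk₁i : k₁ ≠ i := hk₁ ▸ hki
      have hprodv : v.prod = (Word.cons a t h1 h2).prod := by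
        show v.toWord.prod = _
        rw [hv]
      set W : NeWord G k₂ k₂ :=
        NeWord.append (NeWord.append v.inv hk₁i (NeWord.singleton m hm)) (Ne.symm hk₁i) v with hW
      have hWprod : W.prod = of m' := by
        rw [hW]
        rw [NeWord.append_prod, NeWord.append_prod, NeWord.prod_singleton, NeWord.inv_prod,
          hprodv, ← h]
        rw [Word.prod_cons]
      have hWword : Word.equiv (of m') = W.toWord := prod_eq_iff hWprod
      have hlen : (Word.equiv (of m')).toList.length ≤ 1 := equiv_of_length_le m'
      rw [hWword] at hlen
      have : W.toWord.toList = v.inv.toList ++ [⟨i, m⟩] ++ v.toList := by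
        show W.toList = _
        simp [hW]
      rw [this] at hlen
      have hv1 : 1 ≤ v.toList.length := List.length_pos_iff.mpr (NeWord.toList_ne_nil v)
      simp only [List.length_append, List.length_cons, List.length_nil] at hlen
      omega

lemma conj_eq_of {g : CoprodI G} {i : ι} {m : G i} (hm : m ≠ 1) {j : ι} {m' : G j}
    (h : g * of m * g⁻¹ = of m') : i = j ∧ ∃ a : G i, g = of a := by
  have hu : (Word.equiv g⁻¹).prod = g⁻¹ := Word.equiv.symm_apply_apply g⁻¹
  have := conj_word_eq_of (Word.equiv g⁻¹) i m hm j m' (by rw [hu, inv_inv]; exact h)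
  rwa [hu, inv_inv] at this

end Key

universe u
variable (A : Type u) [Group A]

/-- The Bool-indexed family for the free product `A * ℤ`. -/
def Ffam (A : Type u) : Bool → Type u
  | true => A
  | false => ULift (Multiplicative ℤ)

instance : ∀ b, Group (Ffam A b)
  | true => ‹Group A›
  | false => inferInstanceAs (Group (ULift (Multiplicative ℤ)))

def phi : Coprod A (Multiplicative ℤ) →* CoprodI (Ffam A) :=
  Coprod.lift (CoprodI.of (M := Ffam A) (i := true))
    ((CoprodI.of (M := Ffam A) (i := false)).comp (MulEquiv.ulift.symm.toMonoidHom))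

def psiFam : ∀ b : Bool, Ffam A b →* Coprod A (Multiplicative ℤ)
  | true => Coprod.inl
  | false => Coprod.inr.comp MulEquiv.ulift.toMonoidHom

def psi : CoprodI (Ffam A) →* Coprod A (Multiplicative ℤ) :=
  CoprodI.lift (psiFam A)

lemma psi_phi (g : Coprod A (Multiplicative ℤ)) : psi A (phi A g) = g := by
  have : (psi A).comp (phi A) = MonoidHom.id _ := by
    apply Coprod.hom_ext
    · ext a
      simp only [MonoidHom.comp_apply, MonoidHom.id_apply, phi, psi, Coprod.lift_apply_inl]
      exact CoprodI.lift_of _ _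
    · ext z
      simp only [MonoidHom.comp_apply, MonoidHom.id_apply, phi, psi, Coprod.lift_apply_inr]
      exact CoprodI.lift_of (M := Ffam A) (psiFam A) (i := false) _
  exact DFunLike.congr_fun this g

lemma phi_inl (a : A) : phi A (Coprod.inl a) = CoprodI.of (M := Ffam A) (i := true) a :=
  Coprod.lift_apply_inl _ _ _

lemma phi_inr (z : Multiplicative ℤ) :
    phi A (Coprod.inr z) = CoprodI.of (M := Ffam A) (i := false) (ULift.up z) :=
  Coprod.lift_apply_inr _ _ _

section Main

variable {A : Type u} [Group A]

lemma conj_inl_eq_inl {g : Coprod A (Multiplicative ℤ)} {a a' : A} (ha : a ≠ 1)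
    (h : g * Coprod.inl a * g⁻¹ = Coprod.inl a') : ∃ b : A, g = Coprod.inl b := by
  letI : ∀ b, DecidableEq (Ffam A b) := fun b => Classical.decEq _
  have hphi : phi A g * of (i := true) (a : Ffam A true) * (phi A g)⁻¹
      = of (i := true) (a' : Ffam A true) := by
    rw [← phi_inl, ← phi_inl, ← map_inv, ← map_mul, ← map_mul, h]
  obtain ⟨-, b, hb⟩ := @conj_eq_of Bool instDecidableEqBool (Ffam A) _ (fun b => Classical.decEq _) (phi A g) true a ha true a' hphi
  exact ⟨b, by rw [← psi_phi A g, hb]; exact (CoprodI.lift_of _ _)⟩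

lemma conj_inl_ne_inr {g : Coprod A (Multiplicative ℤ)} {a : A} {z : Multiplicative ℤ}
    (ha : a ≠ 1) (h : g * Coprod.inl a * g⁻¹ = Coprod.inr z) : False := by
  letI : ∀ b, DecidableEq (Ffam A b) := fun b => Classical.decEq _
  have hphi : phi A g * of (i := true) (a : Ffam A true) * (phi A g)⁻¹
      = of (i := false) (ULift.up z : Ffam A false) := by
    rw [← phi_inl, ← phi_inr, ← map_inv, ← map_mul, ← map_mul, h]
  obtain ⟨htf, -⟩ := @conj_eq_of Bool instDecidableEqBool (Ffam A) _ (fun b => Classical.decEq _) (phi A g) true a ha false (ULift.up z) hphi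
  exact Bool.noConfusion htf

lemma conj_inr_eq_inr {g : Coprod A (Multiplicative ℤ)} {z z' : Multiplicative ℤ} (hz : z ≠ 1)
    (h : g * Coprod.inr z * g⁻¹ = Coprod.inr z') : ∃ w : Multiplicative ℤ, g = Coprod.inr w := by
  letI : ∀ b, DecidableEq (Ffam A b) := fun b => Classical.decEq _
  have hphi : phi A g * of (i := false) (ULift.up z : Ffam A false) * (phi A g)⁻¹
      = of (i := false) (ULift.up z' : Ffam A false) := by
    rw [← phi_inr, ← phi_inr, ← map_inv, ← map_mul, ← map_mul, h]
  have hz' : (ULift.up z : Ffam A false) ≠ 1 := fun hh => hz (congrArg ULift.down hh)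
  obtain ⟨-, w, hw⟩ := @conj_eq_of Bool instDecidableEqBool (Ffam A) _ (fun b => Classical.decEq _) (phi A g) false (ULift.up z) hz' false (ULift.up z') hphi
  refine ⟨MulEquiv.ulift w, ?_⟩
  rw [← psi_phi A g, hw]
  exact (CoprodI.lift_of _ _)

end Main



theorem free_product_with_infinite_cyclic (A : Type*) [Group A]
    (x : Coprod A (Multiplicative ℤ))
    (hx : x = Coprod.inr (Multiplicative.ofAdd (1 : ℤ))) :
    Malnormal (Subgroup.zpowers x) ∧
    (∀ B : Subgroup A, Malnormal B → Malnormal (B.map (Coprod.inl : A →* Coprod A (Multiplicative ℤ)))) ∧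
    (∀ a : A, a ≠ 1 → ∀ g : Coprod A (Multiplicative ℤ),
      g * Coprod.inl a * g⁻¹ ∉ Subgroup.zpowers x) := by
  have hpow : ∀ k : ℤ, x ^ k = Coprod.inr (Multiplicative.ofAdd k) := by
    intro k
    rw [hx, ← map_zpow]
    congr 1
    rw [← ofAdd_zsmul, smul_eq_mul, mul_one]
  refine ⟨?_, ?_, ?_⟩
  · -- Malnormal (zpowers x)
    intro g hg y hy hconj
    obtain ⟨k, rfl⟩ := Subgroup.mem_zpowers_iff.mp hy
    obtain ⟨k', hk'⟩ := Subgroup.mem_zpowers_iff.mp hconj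
    by_cases hk : x ^ k = 1
    · exact hk
    exfalso
    have hzk : (Multiplicative.ofAdd k) ≠ 1 := by
      intro hh
      apply hk
      rw [hpow, hh, map_one]
    have heq : g * Coprod.inr (Multiplicative.ofAdd k) * g⁻¹
        = Coprod.inr (Multiplicative.ofAdd k') := by
      rw [← hpow, ← hpow]
      exact hk'.symm
    obtain ⟨w, rfl⟩ := conj_inr_eq_inr heq (hz := hzk)
    apply hg
    rw [Subgroup.mem_zpowers_iff]
    exact ⟨Multiplicative.toAdd w, by rw [hpow]; simp⟩
  · -- malnormal subgroups of A stay malnormal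
    intro B hB g hg y hy hconj
    obtain ⟨b, hb, rfl⟩ := Subgroup.mem_map.mp hy
    obtain ⟨b', hb', hbeq⟩ := Subgroup.mem_map.mp hconj
    by_cases hb1 : b = 1
    · rw [hb1, map_one]
    exfalso
    obtain ⟨c, rfl⟩ := conj_inl_eq_inl hb1 hbeq.symm
    have hcB : c ∉ B := fun hc => hg (Subgroup.mem_map.mpr ⟨c, hc, rfl⟩)
    have hinl : (Coprod.inl : A →* Coprod A (Multiplicative ℤ)) (c * b * c⁻¹)
        = Coprod.inl b' := by
      rw [map_mul, map_mul, map_inv]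
      exact hbeq.symm
    have : c * b * c⁻¹ = b' := Coprod.inl_injective hinl
    exact hb1 (hB c hcB b hb (this ▸ hb'))
  · -- no conjugate of a nontrivial element of A lies in ⟨x⟩
    intro a ha g hmem
    obtain ⟨k, hk⟩ := Subgroup.mem_zpowers_iff.mp hmem
    exact conj_inl_ne_inr ha (by rw [← hk, hpow])
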